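/- In the graph G_k^{μ,υ}(X), a set S of k vertices forms a k-clique if and only if S contains exactly one vertex u_i from U, exactly one vertex y_j from Y, exactly one vertex from each W_p (1 ≤ p ≤ k−2), and μ_i = 1, υ_j = 1, X_{i,j} = 1. -/

import Mathlib

/-- The gadget graph `G_k^{μ,υ}(X)` with vertex parts `U`, `Y`, `W_1, …, W_{k−2}`, each of
size `m = n/3`. Vertices: `inl i = u_i`, `inr (inl j) = y_j`, `inr (inr (p, j)) = w_{p,j}`. -/
def gadget (k m : ℕ) (μ υ : Fin m → Bool) (X : Fin m → Fin m → Bool) :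
    SimpleGraph (Fin m ⊕ Fin m ⊕ Fin (k - 2) × Fin m) where
  Adj a b :=
    match a, b with
    | .inl i, .inr (.inl j) => X i j = true
    | .inr (.inl j), .inl i => X i j = true
    | .inl i, .inr (.inr _) => μ i = true
    | .inr (.inr _), .inl i => μ i = true
    | .inr (.inl i), .inr (.inr _) => υ i = true
    | .inr (.inr _), .inr (.inl i) => υ i = true
    | .inr (.inr (p, _)), .inr (.inr (q, _)) => p ≠ q
    | _, _ => False
  symm := by
    constructor
    rintro (i | j | ⟨p, w⟩) (i' | j' | ⟨p', w'⟩) h <;> simp_all <;> exact Ne.symm h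
  loopless := by
    constructor
    rintro (i | j | ⟨p, w⟩) h <;> simp_all

open Finset in
/-- A set `S` of `k` vertices of `G_k^{μ,υ}(X)` forms a `k`-clique if and only if it
consists of exactly one `u_i`, exactly one `y_j`, and exactly one vertex of each `W_p`,
with `μ_i = 1`, `υ_j = 1` and `X_{i,j} = 1`. -/
theorem stmt9 (k m : ℕ) (hk : 3 ≤ k) (μ υ : Fin m → Bool) (X : Fin m → Fin m → Bool)
    (S : Finset (Fin m ⊕ Fin m ⊕ Fin (k - 2) × Fin m)) :
    (gadget k m μ υ X).IsNClique k S ↔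
      ∃ (i j : Fin m) (g : Fin (k - 2) → Fin m),
        μ i = true ∧ υ j = true ∧ X i j = true ∧
        S = insert (Sum.inl i) (insert (Sum.inr (Sum.inl j))
              (Finset.image (fun p => Sum.inr (Sum.inr (p, g p))) Finset.univ)) := by
  constructor
  · rintro ⟨hclique, hcard⟩
    set f : (Fin m ⊕ Fin m ⊕ Fin (k - 2) × Fin m) → ℕ := fun a =>
      match a with
      | .inl _ => 0
      | .inr (.inl _) => 1
      | .inr (.inr (p, _)) => p.val + 2 with hf
    have hinj : Set.InjOn f S := by
      intro a ha b hb hfab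
      by_contra hne
      have hadj := hclique ha hb hne
      rcases a with i | j | ⟨p, w⟩ <;> rcases b with i' | j' | ⟨p', w'⟩ <;>
        simp_all [f, gadget]
      · exact hadj (Fin.ext hfab)
    have himg : S.image f = Finset.range k := by
      apply Finset.eq_of_subset_of_card_le
      · intro t ht
        simp only [mem_image] at ht
        obtain ⟨a, ha, rfl⟩ := ht
        rcases a with i | j | ⟨p, w⟩ <;> simp [f] <;> omega
      · rw [Finset.card_image_of_injOn hinj, hcard, Finset.card_range]
    have hmem : ∀ t, t < k → ∃ a ∈ S, f a = t := by
      intro t ht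
      have : t ∈ S.image f := by rw [himg]; exact Finset.mem_range.mpr ht
      simpa [mem_image] using this
    obtain ⟨a0, ha0, hfa0⟩ := hmem 0 (by omega)
    obtain ⟨i, rfl⟩ : ∃ i, a0 = Sum.inl i := by
      rcases a0 with i | j | ⟨p, w⟩ <;> simp_all [f]
    obtain ⟨a1, ha1, hfa1⟩ := hmem 1 (by omega)
    obtain ⟨j, rfl⟩ : ∃ j, a1 = Sum.inr (Sum.inl j) := by
      rcases a1 with i' | j | ⟨p, w⟩ <;> simp_all [f]
    have hg : ∀ p : Fin (k - 2), ∃ x, Sum.inr (Sum.inr (p, x)) ∈ S := by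
      intro p
      obtain ⟨a, ha, hfa⟩ := hmem (p.val + 2) (by have := p.isLt; omega)
      rcases a with i' | j' | ⟨q, w⟩
      · simp [f] at hfa
      · simp [f] at hfa
      obtain rfl : q = p := Fin.ext (by simp only [f] at hfa; omega)
      exact ⟨w, ha⟩
    choose g hgmem using hg
    have hp0 : (0 : ℕ) < k - 2 := by omega
    refine ⟨i, j, g, ?_, ?_, ?_, ?_⟩
    · have := hclique ha0 (hgmem ⟨0, hp0⟩) (by simp)
      simpa [gadget] using this
    · have := hclique ha1 (hgmem ⟨0, hp0⟩) (by simp)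
      simpa [gadget] using this
    · have := hclique ha0 ha1 (by simp)
      simpa [gadget] using this
    · ext a
      simp only [mem_insert, mem_image, mem_univ, true_and]
      constructor
      · intro ha
        rcases a with i' | j' | ⟨p, w⟩
        · left
          exact hinj ha ha0 rfl
        · right; left
          exact hinj ha ha1 rfl
        · right; right
          refine ⟨p, ?_⟩
          exact hinj (hgmem p) ha rfl
      · rintro (rfl | rfl | ⟨p, rfl⟩)
        · exact ha0
        · exact ha1
        · exact hgmem p
  · rintro ⟨i, j, g, hμ, hυ, hX, rfl⟩
    constructor
    · intro a ha b hb hne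
      simp only [coe_insert, Set.mem_insert_iff, coe_image, Set.mem_image,
        mem_coe, mem_univ, coe_univ, Set.mem_univ, true_and, Set.image_univ,
        Set.mem_range] at ha hb
      rcases ha with rfl | rfl | ⟨p, rfl⟩ <;> rcases hb with rfl | rfl | ⟨q, rfl⟩ <;>
        first
          | exact absurd rfl hne
          | simp_all [gadget]
    · rw [Finset.card_insert_of_notMem (by simp), Finset.card_insert_of_notMem (by simp),
        Finset.card_image_of_injective _ (by intro p q h; simp only [Sum.inr.injEq, Prod.mk.injEq] at h; exact h.1), Finset.card_univ,
        Fintype.card_fin]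
      omega
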